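/- Let Θ be a finite set, P a row-stochastic matrix on Θ with stationary distribution π, and r : Θ → [0,1]. Suppose there exist constants C ≥ 0 and λ ∈ [0,1) such that for every probability distribution β on Θ and every integer t ≥ 0, ∑_{θ∈Θ} |(βPᵗ)(θ) − π(θ)| ≤ C λᵗ. Fix γ ∈ (0,1], positive integers τ₀, ζ, T, set τ_i = τ₀ + ζ(i−1) and Γ_i = ∑_{t=0}^{τ_i−1} γᵗ, and let β₁, …, β_T be arbitrary probability distributions on Θ. Then |∑_θ r(θ)π(θ) − (1/T)∑_{i=1}^{T} (1/Γ_i) ∑_{t=0}^{τ_i−1} γ^{τ_i−1−t} ∑_θ r(θ)(β_i Pᵗ)(θ)| ≤ L(T)/T, where, with η = min{γ,λ}, φ = max{γ,λ}: L(T) = C·(φ^{τ₀}/(φ−η))·(1−φ^{ζT})/(1−φ^ζ) if γ ∈ (0,1) and γ ≠ λ; L(T) = C·φ^{τ₀−1}·((τ₀ − φ^{ζT}(τ₀+ζT))/(1−φ^ζ) + ζφ^ζ(1−φ^{ζT})/(1−φ^ζ)²) if γ ∈ (0,1) and γ = λ; and L(T) = (C/(1−λ))·(1/τ₀ + (1/ζ)log(1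 + ζT/τ₀)) if γ = 1. -/

import Mathlib

open Finset
open scoped Classical

noncomputable section

lemma log_ratio_lb (u v : ℝ) (hu : 0 < u) (huv : u ≤ v) :
    (v - u)/v ≤ Real.log (v/u) := by
  have hv : 0 < v := lt_of_lt_of_le hu huv
  have h1 : Real.log (u/v) ≤ u/v - 1 := Real.log_le_sub_one_of_pos (by positivity)
  have h2 : Real.log (v/u) = - Real.log (u/v) := by
    rw [← Real.log_inv]; congr 1; field_simp
  rw [h2]
  have : (v-u)/v = -(u/v - 1) := by field_simp; ring
  rw [this]
  linarith

lemma harmonic_log_bound (a b : ℝ) (ha : 0 < a) (hb : 0 < b) (n : ℕ) :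
    ∑ i ∈ range (n+1), 1/(a + b*i) ≤ 1/a + (1/b) * Real.log ((a + b*n)/a) := by
  induction n with
  | zero => simp [Real.log_div ha.ne' ha.ne']
  | succ n ih =>
    have hpos : ∀ m : ℕ, (0:ℝ) < a + b*m := fun m => by positivity
    have key : 1/(a + b*(n+1:ℕ)) ≤ (1/b) * Real.log ((a + b*(n+1:ℕ))/(a + b*n)) := by
      have h := log_ratio_lb (a + b*n) (a + b*(n+1:ℕ)) (hpos n) (by push_cast; nlinarith)
      have he : (a + b*(n+1:ℕ) - (a + b*n))/(a + b*(n+1:ℕ)) = b/(a + b*(n+1:ℕ)) := by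
        push_cast; ring_nf
      rw [he] at h
      calc 1/(a + b*(n+1:ℕ)) = (1/b) * (b/(a + b*(n+1:ℕ))) := by field_simp
        _ ≤ (1/b) * Real.log ((a + b*(n+1:ℕ))/(a + b*n)) :=
            mul_le_mul_of_nonneg_left h (by positivity)
    rw [Finset.sum_range_succ]
    have hlog : Real.log ((a + b*(n+1:ℕ))/a) =
        Real.log ((a + b*n)/a) + Real.log ((a + b*(n+1:ℕ))/(a + b*n)) := by
      rw [← Real.log_mul (by positivity) (by positivity)]
      congr 1
      field_simp
    rw [hlog]
    linarith

lemma sum_arith_geom (x a b : ℝ) (n : ℕ) :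
    (∑ i ∈ range n, (a + b*i)*x^i) * (1-x)^2 =
      (a - x^n*(a+b*n))*(1-x) + b*x*(1-x^n) := by
  induction n with
  | zero => simp
  | succ n ih =>
    rw [Finset.sum_range_succ, add_mul, ih]
    push_cast
    ring


lemma geom_sum_le_inv (q : ℝ) (h0 : 0 ≤ q) (h1 : q < 1) (n : ℕ) :
    ∑ t ∈ range n, q^t ≤ 1/(1-q) := by
  rw [geom_sum_eq h1.ne]
  have h2 : (q^n - 1)/(q - 1) = (1 - q^n)/(1-q) := by
    rw [div_eq_div_iff (by linarith) (by linarith)]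
    ring
  rw [h2]
  have hq : (0:ℝ) ≤ q^n := pow_nonneg h0 n
  rw [div_le_div_iff₀ (by linarith) (by linarith)]
  nlinarith


/-- The distribution after `t` steps of the chain with transition matrix `P`,
starting from the distribution `β`. -/
def distIter {Θ : Type*} [Fintype Θ] (P : Θ → Θ → ℝ) (β : Θ → ℝ) : ℕ → Θ → ℝ
  | 0 => β
  | (t + 1) => fun θ' => ∑ θ, distIter P β t θ * P θ θ'

/-- deterministic content of Lemma 2, convergence of the expected mean
epoch reward to the expected stationary reward after `T` pulls with linearly growing
epoch lengths `τ_i = τ₀ + ζ(i-1)`.  Here epoch `i` (for `i = 0, …, T-1` in 0-based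
indexing, corresponding to the paper's `i+1`) has length `τ₀ + ζ·i`, discount weights
`γ^{τ_i-1-t}`, normalizer `Γ_i = ∑_{t<τ_i} γ^t`, and arbitrary initial distribution
`β i`. -/
theorem expected_mean_epoch_reward_close_to_stationary
    {Θ : Type*} [Fintype Θ] [Nonempty Θ]
    (P : Θ → Θ → ℝ) (π : Θ → ℝ) (r : Θ → ℝ)
    (hP_nonneg : ∀ θ θ', 0 ≤ P θ θ') (hP_row : ∀ θ, ∑ θ', P θ θ' = 1)
    (hπ_nonneg : ∀ θ, 0 ≤ π θ) (hπ_sum : ∑ θ, π θ = 1)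
    (hπ_stat : ∀ θ', ∑ θ, π θ * P θ θ' = π θ')
    (hr : ∀ θ, r θ ∈ Set.Icc (0:ℝ) 1)
    (C lam : ℝ) (hC : 0 ≤ C) (hlam0 : 0 ≤ lam) (hlam1 : lam < 1)
    (hmix : ∀ β : Θ → ℝ, (∀ θ, 0 ≤ β θ) → (∑ θ, β θ = 1) →
      ∀ t : ℕ, ∑ θ, |distIter P β t θ - π θ| ≤ C * lam ^ t)
    (γ : ℝ) (hγ0 : 0 < γ) (hγ1 : γ ≤ 1)
    (τ₀ ζ T : ℕ) (hτ₀ : 0 < τ₀) (hζ : 0 < ζ) (hT : 0 < T)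
    (β : ℕ → Θ → ℝ)
    (hβ_nonneg : ∀ i < T, ∀ θ, 0 ≤ β i θ) (hβ_sum : ∀ i < T, ∑ θ, β i θ = 1) :
    |∑ θ, r θ * π θ -
        (1 / (T : ℝ)) * ∑ i ∈ Finset.range T,
          (1 / ∑ t ∈ Finset.range (τ₀ + ζ * i), γ ^ t) *
            ∑ t ∈ Finset.range (τ₀ + ζ * i),
              γ ^ (τ₀ + ζ * i - 1 - t) * ∑ θ, r θ * distIter P (β i) t θ| ≤
      (if γ = 1 then
        (C / (1 - lam)) * (1 / (τ₀ : ℝ) + (1 / (ζ : ℝ)) * Real.log (1 + (ζ : ℝ) * T / τ₀))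
       else if γ = lam then
        C * (max γ lam) ^ (τ₀ - 1) *
          (((τ₀ : ℝ) - (max γ lam) ^ (ζ * T) * ((τ₀ : ℝ) + (ζ : ℝ) * T)) /
              (1 - (max γ lam) ^ ζ) +
            (ζ : ℝ) * (max γ lam) ^ ζ * (1 - (max γ lam) ^ (ζ * T)) /
              (1 - (max γ lam) ^ ζ) ^ 2)
       else
        C * ((max γ lam) ^ τ₀ / (max γ lam - min γ lam)) *
          ((1 - (max γ lam) ^ (ζ * T)) / (1 - (max γ lam) ^ ζ))) / (T : ℝ) := by
  have hτpos : ∀ i : ℕ, 0 < τ₀ + ζ * i := fun i => Nat.lt_of_lt_of_le hτ₀ (Nat.le_add_right _ _)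
  set Γ : ℕ → ℝ := fun i => ∑ t ∈ Finset.range (τ₀ + ζ * i), γ ^ t with hΓdef
  have hΓ1 : ∀ i, (1:ℝ) ≤ Γ i := by
    intro i
    have h0 : (0:ℕ) ∈ Finset.range (τ₀ + ζ * i) := Finset.mem_range.mpr (hτpos i)
    have := Finset.single_le_sum (f := fun t => γ ^ t)
      (fun t _ => by positivity) h0
    simpa using this
  have hΓpos : ∀ i, (0:ℝ) < Γ i := fun i => lt_of_lt_of_le one_pos (hΓ1 i)
  set g : ℕ → ℝ := fun i =>
    ∑ t ∈ Finset.range (τ₀ + ζ * i), γ ^ (τ₀ + ζ * i - 1 - t) * lam ^ t with hgdef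
  have hg_nonneg : ∀ i, 0 ≤ g i := fun i =>
    Finset.sum_nonneg fun t _ => by positivity
  set A : ℝ := ∑ θ, r θ * π θ with hAdef
  -- per-epoch bound
  have key : ∀ i ∈ Finset.range T,
      |A - (1 / Γ i) * ∑ t ∈ Finset.range (τ₀ + ζ * i),
          γ ^ (τ₀ + ζ * i - 1 - t) * ∑ θ, r θ * distIter P (β i) t θ|
        ≤ (1 / Γ i) * (C * g i) := by
    intro i hi
    have hiT : i < T := Finset.mem_range.mp hi
    set B : ℕ → ℝ := fun t => ∑ θ, r θ * distIter P (β i) t θ with hBdef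
    have hAB : ∀ t : ℕ, |A - B t| ≤ C * lam ^ t := by
      intro t
      have h1 : A - B t = ∑ θ, r θ * (π θ - distIter P (β i) t θ) := by
        rw [hAdef, hBdef, ← Finset.sum_sub_distrib]
        exact Finset.sum_congr rfl fun θ _ => by ring
      rw [h1]
      calc |∑ θ, r θ * (π θ - distIter P (β i) t θ)|
          ≤ ∑ θ, |r θ * (π θ - distIter P (β i) t θ)| := Finset.abs_sum_le_sum_abs _ _
        _ ≤ ∑ θ, |distIter P (β i) t θ - π θ| := by
            apply Finset.sum_le_sum
            intro θ _
            rw [abs_mul, abs_sub_comm]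
            have hr1 : |r θ| ≤ 1 := abs_le.mpr ⟨by linarith [(hr θ).1], (hr θ).2⟩
            calc |r θ| * |distIter P (β i) t θ - π θ|
                ≤ 1 * |distIter P (β i) t θ - π θ| :=
                  mul_le_mul_of_nonneg_right hr1 (abs_nonneg _)
              _ = _ := one_mul _
        _ ≤ C * lam ^ t := hmix (β i) (hβ_nonneg i hiT) (hβ_sum i hiT) t
    have hrefl : ∑ t ∈ Finset.range (τ₀ + ζ * i), γ ^ (τ₀ + ζ * i - 1 - t) = Γ i :=
      Finset.sum_range_reflect (fun t => γ ^ t) _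
    have hid : A - (1 / Γ i) * ∑ t ∈ Finset.range (τ₀ + ζ * i),
        γ ^ (τ₀ + ζ * i - 1 - t) * B t
        = (1 / Γ i) * ∑ t ∈ Finset.range (τ₀ + ζ * i),
            γ ^ (τ₀ + ζ * i - 1 - t) * (A - B t) := by
      have h2 : ∑ t ∈ Finset.range (τ₀ + ζ * i), γ ^ (τ₀ + ζ * i - 1 - t) * (A - B t)
          = Γ i * A - ∑ t ∈ Finset.range (τ₀ + ζ * i), γ ^ (τ₀ + ζ * i - 1 - t) * B t := by
        simp only [mul_sub]
        rw [Finset.sum_sub_distrib, ← Finset.sum_mul, hrefl]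
      rw [h2, mul_sub, ← mul_assoc]
      have : (1 / Γ i) * Γ i = 1 := by field_simp [(hΓpos i).ne']
      rw [this, one_mul]
    rw [hid, abs_mul, abs_of_pos (one_div_pos.mpr (hΓpos i))]
    apply mul_le_mul_of_nonneg_left _ (one_div_pos.mpr (hΓpos i)).le
    calc |∑ t ∈ Finset.range (τ₀ + ζ * i), γ ^ (τ₀ + ζ * i - 1 - t) * (A - B t)|
        ≤ ∑ t ∈ Finset.range (τ₀ + ζ * i), |γ ^ (τ₀ + ζ * i - 1 - t) * (A - B t)| :=
          Finset.abs_sum_le_sum_abs _ _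
      _ ≤ ∑ t ∈ Finset.range (τ₀ + ζ * i), γ ^ (τ₀ + ζ * i - 1 - t) * (C * lam ^ t) := by
          apply Finset.sum_le_sum
          intro t _
          rw [abs_mul, abs_of_pos (pow_pos hγ0 _)]
          exact mul_le_mul_of_nonneg_left (hAB t) (by positivity)
      _ = C * g i := by
          rw [hgdef, Finset.mul_sum]
          exact Finset.sum_congr rfl fun t _ => by ring
  -- global reduction
  have hTpos : (0:ℝ) < T := by exact_mod_cast hT
  have main : |A - (1 / (T : ℝ)) * ∑ i ∈ Finset.range T,
      (1 / Γ i) * ∑ t ∈ Finset.range (τ₀ + ζ * i),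
        γ ^ (τ₀ + ζ * i - 1 - t) * ∑ θ, r θ * distIter P (β i) t θ|
      ≤ (1 / (T : ℝ)) * ∑ i ∈ Finset.range T, (1 / Γ i) * (C * g i) := by
    have hid : A - (1 / (T : ℝ)) * ∑ i ∈ Finset.range T,
        (1 / Γ i) * ∑ t ∈ Finset.range (τ₀ + ζ * i),
          γ ^ (τ₀ + ζ * i - 1 - t) * ∑ θ, r θ * distIter P (β i) t θ
        = (1 / (T : ℝ)) * ∑ i ∈ Finset.range T,
            (A - (1 / Γ i) * ∑ t ∈ Finset.range (τ₀ + ζ * i),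
              γ ^ (τ₀ + ζ * i - 1 - t) * ∑ θ, r θ * distIter P (β i) t θ) := by
      rw [Finset.sum_sub_distrib, Finset.sum_const, Finset.card_range, nsmul_eq_mul, mul_sub,
        ← mul_assoc]
      have : (1 / (T:ℝ)) * T = 1 := by field_simp
      rw [this, one_mul]
    rw [hid, abs_mul, abs_of_pos (by positivity : (0:ℝ) < 1 / (T:ℝ))]
    exact mul_le_mul_of_nonneg_left
      ((Finset.abs_sum_le_sum_abs _ _).trans (Finset.sum_le_sum key)) (by positivity)
  set L : ℝ := (if γ = 1 then
        (C / (1 - lam)) * (1 / (τ₀ : ℝ) + (1 / (ζ : ℝ)) * Real.log (1 + (ζ : ℝ) * T / τ₀))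
       else if γ = lam then
        C * (max γ lam) ^ (τ₀ - 1) *
          (((τ₀ : ℝ) - (max γ lam) ^ (ζ * T) * ((τ₀ : ℝ) + (ζ : ℝ) * T)) /
              (1 - (max γ lam) ^ ζ) +
            (ζ : ℝ) * (max γ lam) ^ ζ * (1 - (max γ lam) ^ (ζ * T)) /
              (1 - (max γ lam) ^ ζ) ^ 2)
       else
        C * ((max γ lam) ^ τ₀ / (max γ lam - min γ lam)) *
          ((1 - (max γ lam) ^ (ζ * T)) / (1 - (max γ lam) ^ ζ))) with hLdef
  suffices hS : ∑ i ∈ Finset.range T, (1 / Γ i) * (C * g i) ≤ L by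
    calc |A - (1 / (T : ℝ)) * ∑ i ∈ Finset.range T,
        (1 / Γ i) * ∑ t ∈ Finset.range (τ₀ + ζ * i),
          γ ^ (τ₀ + ζ * i - 1 - t) * ∑ θ, r θ * distIter P (β i) t θ|
        ≤ (1 / (T : ℝ)) * ∑ i ∈ Finset.range T, (1 / Γ i) * (C * g i) := main
      _ ≤ (1 / (T : ℝ)) * L := mul_le_mul_of_nonneg_left hS (by positivity)
      _ = L / (T : ℝ) := by ring
  rw [hLdef]
  split_ifs with hγeq hγlam
  · -- γ = 1
    subst hγeq
    have hτR : (0:ℝ) < τ₀ := by exact_mod_cast hτ₀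
    have hζR : (0:ℝ) < ζ := by exact_mod_cast hζ
    have hΓeq : ∀ i : ℕ, Γ i = (τ₀:ℝ) + ζ*i := by
      intro i
      rw [hΓdef]
      simp only [one_pow, Finset.sum_const, Finset.card_range, nsmul_eq_mul, mul_one]
      push_cast
      ring
    have hgle : ∀ i : ℕ, g i ≤ 1/(1-lam) := by
      intro i
      rw [hgdef]
      simp only [one_pow, one_mul]
      exact geom_sum_le_inv lam hlam0 hlam1 _
    obtain ⟨n, rfl⟩ : ∃ n, T = n + 1 := ⟨T - 1, (Nat.succ_pred_eq_of_pos hT).symm⟩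
    have hhar := harmonic_log_bound (τ₀:ℝ) (ζ:ℝ) hτR hζR n
    calc ∑ i ∈ Finset.range (n+1), (1/Γ i)*(C*g i)
        ≤ ∑ i ∈ Finset.range (n+1), (C/(1-lam)) * (1/((τ₀:ℝ) + ζ*i)) := by
          apply Finset.sum_le_sum
          intro i _
          rw [hΓeq i]
          have hpos : (0:ℝ) < (τ₀:ℝ) + ζ*i := by positivity
          calc (1/((τ₀:ℝ)+ζ*i))*(C*g i)
              ≤ (1/((τ₀:ℝ)+ζ*i))*(C*(1/(1-lam))) := by
                apply mul_le_mul_of_nonneg_left _ (by positivity)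
                exact mul_le_mul_of_nonneg_left (hgle i) hC
            _ = (C/(1-lam))*(1/((τ₀:ℝ)+ζ*i)) := by ring
      _ = (C/(1-lam)) * ∑ i ∈ Finset.range (n+1), 1/((τ₀:ℝ)+ζ*i) := by
          rw [Finset.mul_sum]
      _ ≤ (C/(1-lam)) * (1/(τ₀:ℝ) + (1/(ζ:ℝ))*Real.log (((τ₀:ℝ)+ζ*n)/τ₀)) := by
          have h1lam : (0:ℝ) < 1 - lam := by linarith
          exact mul_le_mul_of_nonneg_left hhar (by positivity)
      _ ≤ (C/(1-lam)) * (1/(τ₀:ℝ) + (1/(ζ:ℝ))*Real.log (1 + (ζ:ℝ)*((n:ℝ)+1)/τ₀)) := by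
          have h1lam : (0:ℝ) < 1 - lam := by linarith
          apply mul_le_mul_of_nonneg_left _ (by positivity)
          apply add_le_add le_rfl
          apply mul_le_mul_of_nonneg_left _ (by positivity)
          have harg : ((τ₀:ℝ)+ζ*n)/τ₀ ≤ 1 + (ζ:ℝ)*((n:ℝ)+1)/τ₀ := by
            have he : (1:ℝ) + (ζ:ℝ)*((n:ℝ)+1)/τ₀ = ((τ₀:ℝ)+ζ*((n:ℝ)+1))/τ₀ := by
              field_simp
            rw [he, div_le_div_iff₀ hτR hτR]
            nlinarith [mul_pos hζR hτR]
          have h1pos : (0:ℝ) < ((τ₀:ℝ)+ζ*n)/τ₀ := by positivity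
          exact Real.log_le_log h1pos harg
      _ = (C/(1-lam)) * (1/(τ₀:ℝ) + (1/(ζ:ℝ))*Real.log (1 + (ζ:ℝ)*((n+1:ℕ):ℝ)/τ₀)) := by
          push_cast
          ring_nf
  · -- γ < 1, γ = lam
    have hγlt : γ < 1 := lt_of_le_of_ne hγ1 hγeq
    subst hγlam
    rw [max_self]
    have hx0 : (0:ℝ) < γ^ζ := pow_pos hγ0 ζ
    have hx1 : γ^ζ < 1 := pow_lt_one₀ hγ0.le hγlt hζ.ne'
    have h1x : (1:ℝ) - γ^ζ ≠ 0 := sub_ne_zero.mpr hx1.ne'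
    have hgeq : ∀ i : ℕ, g i = ((τ₀ + ζ*i : ℕ):ℝ) * γ^(τ₀+ζ*i-1) := by
      intro i
      rw [hgdef]
      simp only
      rw [Finset.sum_congr rfl (fun t ht => ?_), Finset.sum_const, Finset.card_range,
        nsmul_eq_mul]
      rw [← pow_add]
      congr 1
      have := Finset.mem_range.mp ht
      omega
    have hpowsplit : ∀ i : ℕ, γ^(τ₀+ζ*i-1) = γ^(τ₀-1) * (γ^ζ)^i := by
      intro i
      rw [← pow_mul, ← pow_add]
      congr 1
      omega
    have h1Γ : ∀ i : ℕ, 1/Γ i ≤ 1 := fun i => by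
      rw [div_le_one (hΓpos i)]; exact hΓ1 i
    have key2 : ∑ i ∈ Finset.range T, ((τ₀:ℝ)+ζ*i)*(γ^ζ)^i
        = ((τ₀:ℝ) - (γ^ζ)^T*((τ₀:ℝ)+(ζ:ℝ)*T))*(1-γ^ζ)/(1-γ^ζ)^2
          + (ζ:ℝ)*(γ^ζ)*(1-(γ^ζ)^T)/(1-γ^ζ)^2 := by
      have h := sum_arith_geom (γ^ζ) (τ₀:ℝ) (ζ:ℝ) T
      have h2 : (1-γ^ζ)^2 ≠ 0 := pow_ne_zero 2 h1x
      rw [← add_div, ← h]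
      exact (mul_div_cancel_right₀ _ h2).symm
    calc ∑ i ∈ Finset.range T, (1/Γ i)*(C*g i)
        ≤ ∑ i ∈ Finset.range T, C*γ^(τ₀-1)*(((τ₀:ℝ)+ζ*i)*(γ^ζ)^i) := by
          apply Finset.sum_le_sum
          intro i _
          have he : C*γ^(τ₀-1)*(((τ₀:ℝ)+ζ*i)*(γ^ζ)^i) = C * g i := by
            rw [hgeq i, hpowsplit i]
            push_cast
            ring
          rw [he]
          exact mul_le_of_le_one_left (mul_nonneg hC (hg_nonneg i)) (h1Γ i)
      _ = C*γ^(τ₀-1) * ∑ i ∈ Finset.range T, ((τ₀:ℝ)+ζ*i)*(γ^ζ)^i := by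
          rw [Finset.mul_sum]
      _ = C * γ ^ (τ₀ - 1) *
          (((τ₀ : ℝ) - γ ^ (ζ * T) * ((τ₀ : ℝ) + (ζ : ℝ) * T)) / (1 - γ ^ ζ) +
            (ζ : ℝ) * γ ^ ζ * (1 - γ ^ (ζ * T)) / (1 - γ ^ ζ) ^ 2) := by
          rw [key2, pow_mul]
          congr 1
          rw [← add_div]
          congr 1
          field_simp
  · -- γ < 1, γ ≠ lam
    have hγlt : γ < 1 := lt_of_le_of_ne hγ1 hγeq
    have hφpos : (0:ℝ) < max γ lam := lt_of_lt_of_le hγ0 (le_max_left _ _)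
    have hφ1 : max γ lam < 1 := max_lt hγlt hlam1
    have hη0 : (0:ℝ) ≤ min γ lam := le_min hγ0.le hlam0
    have hηφ : min γ lam < max γ lam := min_lt_max.mpr hγlam
    have hd : (0:ℝ) < max γ lam - min γ lam := sub_pos.mpr hηφ
    have hx0 : (0:ℝ) < (max γ lam)^ζ := pow_pos hφpos ζ
    have hx1 : (max γ lam)^ζ < 1 := pow_lt_one₀ hφpos.le hφ1 hζ.ne'
    have hq0 : (0:ℝ) ≤ (min γ lam)/(max γ lam) := by positivity
    have hq1 : (min γ lam)/(max γ lam) < 1 := (div_lt_one hφpos).mpr hηφ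
    have h1Γ : ∀ i : ℕ, 1/Γ i ≤ 1 := fun i => by
      rw [div_le_one (hΓpos i)]; exact hΓ1 i
    have hgφ : ∀ i : ℕ, g i
        = ∑ t ∈ Finset.range (τ₀+ζ*i), (max γ lam)^(τ₀+ζ*i-1-t) * (min γ lam)^t := by
      intro i
      rcases le_total lam γ with h | h
      · rw [hgdef]
        simp only [max_eq_left h, min_eq_right h]
      · rw [max_eq_right h, min_eq_left h, hgdef]
        simp only
        rw [← Finset.sum_range_reflect (fun t => lam^(τ₀+ζ*i-1-t) * γ^t) (τ₀+ζ*i)]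
        apply Finset.sum_congr rfl
        intro t ht
        have ht' : t ≤ τ₀+ζ*i-1 := by
          have := Finset.mem_range.mp ht
          omega
        rw [Nat.sub_sub_self ht']
        ring
    have hgle : ∀ i : ℕ, g i ≤ (max γ lam)^(τ₀+ζ*i)/(max γ lam - min γ lam) := by
      intro i
      rw [hgφ i]
      have hterm : ∀ t ∈ Finset.range (τ₀+ζ*i),
          (max γ lam)^(τ₀+ζ*i-1-t)*(min γ lam)^t
          = (max γ lam)^(τ₀+ζ*i-1) * ((min γ lam)/(max γ lam))^t := by
        intro t ht
        have htt := Finset.mem_range.mp ht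
        have hsplit : (max γ lam)^(τ₀+ζ*i-1)
            = (max γ lam)^(τ₀+ζ*i-1-t) * (max γ lam)^t := by
          rw [← pow_add]
          congr 1
          omega
        rw [div_pow, hsplit]
        have hne : ((max γ lam)^t : ℝ) ≠ 0 := (pow_pos hφpos t).ne'
        field_simp
      rw [Finset.sum_congr rfl hterm, ← Finset.mul_sum]
      have hgeom := geom_sum_le_inv ((min γ lam)/(max γ lam)) hq0 hq1 (τ₀+ζ*i)
      calc (max γ lam)^(τ₀+ζ*i-1) * ∑ t ∈ Finset.range (τ₀+ζ*i), ((min γ lam)/(max γ lam))^t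
          ≤ (max γ lam)^(τ₀+ζ*i-1) * (1/(1-(min γ lam)/(max γ lam))) :=
            mul_le_mul_of_nonneg_left hgeom (pow_nonneg hφpos.le _)
        _ = (max γ lam)^(τ₀+ζ*i)/(max γ lam - min γ lam) := by
            have hstep : (max γ lam)^(τ₀+ζ*i) = (max γ lam)^(τ₀+ζ*i-1)*(max γ lam) := by
              rw [← pow_succ]
              congr 1
              have := hτpos i
              omega
            rw [hstep]
            have h1 : 1 - (min γ lam)/(max γ lam) = (max γ lam - min γ lam)/(max γ lam) := by
              field_simp
            rw [h1, one_div_div]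
            ring
    have hgeomsum : ∑ i ∈ Finset.range T, ((max γ lam)^ζ)^i
        = (1-((max γ lam)^ζ)^T)/(1-(max γ lam)^ζ) := by
      rw [geom_sum_eq hx1.ne]
      rw [div_eq_div_iff (by linarith) (by linarith)]
      ring
    calc ∑ i ∈ Finset.range T, (1/Γ i)*(C*g i)
        ≤ ∑ i ∈ Finset.range T,
            C*((max γ lam)^τ₀/(max γ lam - min γ lam))*((max γ lam)^ζ)^i := by
          apply Finset.sum_le_sum
          intro i _
          have hsplit : (max γ lam)^(τ₀+ζ*i) = (max γ lam)^τ₀ * ((max γ lam)^ζ)^i := by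
            rw [← pow_mul, ← pow_add]
          calc (1/Γ i)*(C*g i) ≤ C*g i :=
                mul_le_of_le_one_left (mul_nonneg hC (hg_nonneg i)) (h1Γ i)
            _ ≤ C*((max γ lam)^(τ₀+ζ*i)/(max γ lam - min γ lam)) :=
                mul_le_mul_of_nonneg_left (hgle i) hC
            _ = C*((max γ lam)^τ₀/(max γ lam - min γ lam))*((max γ lam)^ζ)^i := by
                rw [hsplit]
                ring
      _ = C*((max γ lam)^τ₀/(max γ lam - min γ lam))
            * ∑ i ∈ Finset.range T, ((max γ lam)^ζ)^i := by
          rw [Finset.mul_sum]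
      _ = C * ((max γ lam) ^ τ₀ / (max γ lam - min γ lam)) *
          ((1 - (max γ lam) ^ (ζ * T)) / (1 - (max γ lam) ^ ζ)) := by
          rw [hgeomsum, pow_mul]

end
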